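/- Let p ≥ 3 be prime and D ∈ ℤ/p a quadratic non-residue. For a ∈ ℤ/p define D_a = span{(1,1,−a,aD), (1,2,−a,2aD)} and D_∞ = span{(0,0,1,0),(0,0,0,1)} in (ℤ/p)⁴. Then any two of these p + 1 subspaces intersect only in {0}, and ⋃_{a∈ℤ/p} D_a ∪ D_∞ = ⋃_{a₁∈ℤ/p} C_{0,a₁} ∪ C_∞, where C_{0,a₁} = span{(1, a₁, 0, 0), (0, 0, −1, a₁D)} and C_∞ = span{(0,1,0,0),(0,0,0,1)}. -/

import Mathlib

/-- The subspaces `D_a` (for `a ∈ ℤ/p`) and `D_∞` of `(ℤ/p)⁴`. -/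
def Dfam (p : ℕ) (D : ZMod p) : Option (ZMod p) → Submodule (ZMod p) (Fin 4 → ZMod p)
  | none => Submodule.span (ZMod p) {![0, 0, 1, 0], ![0, 0, 0, 1]}
  | some a => Submodule.span (ZMod p) {![1, 1, -a, a * D], ![1, 2, -a, 2 * a * D]}

/-- The subspaces `C_{0,a₁}` (for `a₁ ∈ ℤ/p`) and `C_∞` of `(ℤ/p)⁴`. -/
def Cfam0 (p : ℕ) (D : ZMod p) : Option (ZMod p) → Submodule (ZMod p) (Fin 4 → ZMod p)
  | none => Submodule.span (ZMod p) {![0, 1, 0, 0], ![0, 0, 0, 1]}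
  | some a₁ => Submodule.span (ZMod p) {![1, a₁, 0, 0], ![0, 0, -1, a₁ * D]}

lemma mem_Dfam_some {p : ℕ} (D a : ZMod p) (x : Fin 4 → ZMod p) :
    x ∈ Dfam p D (some a) ↔ x 2 = -(a * x 0) ∧ x 3 = a * D * x 1 := by
  simp only [Dfam, Submodule.mem_span_pair]
  constructor
  · rintro ⟨m, n, rfl⟩
    constructor <;> simp [Matrix.smul_cons] <;> ring
  · rintro ⟨h2, h3⟩
    refine ⟨2 * x 0 - x 1, x 1 - x 0, ?_⟩
    funext i
    fin_cases i <;> simp [Matrix.smul_cons, h2, h3] <;> ring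

lemma mem_Dfam_none {p : ℕ} (D : ZMod p) (x : Fin 4 → ZMod p) :
    x ∈ Dfam p D none ↔ x 0 = 0 ∧ x 1 = 0 := by
  simp only [Dfam, Submodule.mem_span_pair]
  constructor
  · rintro ⟨m, n, rfl⟩
    constructor <;> simp [Matrix.smul_cons]
  · rintro ⟨h0, h1⟩
    refine ⟨x 2, x 3, ?_⟩
    funext i
    fin_cases i <;> simp [Matrix.smul_cons, h0, h1]

lemma mem_Cfam0_some {p : ℕ} (D a : ZMod p) (x : Fin 4 → ZMod p) :
    x ∈ Cfam0 p D (some a) ↔ x 1 = a * x 0 ∧ x 3 = -(a * D * x 2) := by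
  simp only [Cfam0, Submodule.mem_span_pair]
  constructor
  · rintro ⟨m, n, rfl⟩
    constructor <;> simp [Matrix.smul_cons] <;> ring
  · rintro ⟨h1, h3⟩
    refine ⟨x 0, -x 2, ?_⟩
    funext i
    fin_cases i <;> simp [Matrix.smul_cons, h1, h3] <;> ring

lemma mem_Cfam0_none {p : ℕ} (D : ZMod p) (x : Fin 4 → ZMod p) :
    x ∈ Cfam0 p D none ↔ x 0 = 0 ∧ x 2 = 0 := by
  simp only [Cfam0, Submodule.mem_span_pair]
  constructor
  · rintro ⟨m, n, rfl⟩
    constructor <;> simp [Matrix.smul_cons]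
  · rintro ⟨h0, h2⟩
    refine ⟨x 1, x 3, ?_⟩
    funext i
    fin_cases i <;> simp [Matrix.smul_cons, h0, h2]

theorem stmt11 {p : ℕ} (hp : p.Prime) (hp3 : 3 ≤ p) (D : ZMod p)
    (hD : ∀ k : ZMod p, D ≠ k ^ 2) :
    (∀ i j : Option (ZMod p), i ≠ j → Dfam p D i ⊓ Dfam p D j = ⊥) ∧
      (⋃ i : Option (ZMod p), (Dfam p D i : Set (Fin 4 → ZMod p))) =
        ⋃ i : Option (ZMod p), (Cfam0 p D i : Set (Fin 4 → ZMod p)) := by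
  haveI := Fact.mk hp
  have hD0 : D ≠ 0 := fun h => hD 0 (by simp [h])
  constructor
  · rintro i j hij
    rw [eq_bot_iff]
    intro x hx
    rw [Submodule.mem_inf] at hx
    simp only [Submodule.mem_bot]
    match i, j with
    | none, none => exact absurd rfl hij
    | none, some a =>
      rw [mem_Dfam_none] at hx
      rw [mem_Dfam_some] at hx
      obtain ⟨⟨h0, h1⟩, h2, h3⟩ := hx
      funext k
      fin_cases k <;> simp_all
    | some a, none =>
      rw [mem_Dfam_none] at hx
      rw [mem_Dfam_some] at hx
      obtain ⟨⟨h2, h3⟩, h0, h1⟩ := hx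
      funext k
      fin_cases k <;> simp_all
    | some a, some b =>
      have hab : a - b ≠ 0 := sub_ne_zero.mpr (fun h => hij (by rw [h]))
      rw [mem_Dfam_some, mem_Dfam_some] at hx
      obtain ⟨⟨h2, h3⟩, h2', h3'⟩ := hx
      have h0 : x 0 = 0 := by
        have : (a - b) * x 0 = 0 := by
          linear_combination -1 * (h2.symm.trans h2')
        exact (mul_eq_zero.mp this).resolve_left hab
      have h1 : x 1 = 0 := by
        have : (a - b) * D * x 1 = 0 := by linear_combination h3' - h3
        rcases mul_eq_zero.mp this with h | h
        · exact absurd ((mul_eq_zero.mp h).resolve_left hab) hD0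
        · exact h
      funext k
      fin_cases k <;> simp_all
  · ext x
    simp only [Set.mem_iUnion, SetLike.mem_coe]
    constructor
    · rintro ⟨i, hi⟩
      match i with
      | none =>
        rw [mem_Dfam_none] at hi
        obtain ⟨h0, h1⟩ := hi
        by_cases h2 : x 2 = 0
        · exact ⟨none, (mem_Cfam0_none D x).mpr ⟨h0, h2⟩⟩
        · refine ⟨some (-(x 3) / (D * x 2)), (mem_Cfam0_some D _ x).mpr ⟨?_, ?_⟩⟩
          · rw [h0, h1, mul_zero]
          · field_simp
      | some a =>
        rw [mem_Dfam_some] at hi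
        obtain ⟨h2, h3⟩ := hi
        by_cases h0 : x 0 = 0
        · refine ⟨none, (mem_Cfam0_none D x).mpr ⟨h0, ?_⟩⟩
          rw [h2, h0, mul_zero, neg_zero]
        · refine ⟨some (x 1 / x 0), (mem_Cfam0_some D _ x).mpr ⟨?_, ?_⟩⟩
          · field_simp
          · rw [h3, h2]
            field_simp
    · rintro ⟨i, hi⟩
      match i with
      | none =>
        rw [mem_Cfam0_none] at hi
        obtain ⟨h0, h2⟩ := hi
        by_cases h1 : x 1 = 0
        · exact ⟨none, (mem_Dfam_none D x).mpr ⟨h0, h1⟩⟩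
        · refine ⟨some (x 3 / (D * x 1)), (mem_Dfam_some D _ x).mpr ⟨?_, ?_⟩⟩
          · rw [h0, h2, mul_zero, neg_zero]
          · field_simp
      | some a =>
        rw [mem_Cfam0_some] at hi
        obtain ⟨h1, h3⟩ := hi
        by_cases h0 : x 0 = 0
        · refine ⟨none, (mem_Dfam_none D x).mpr ⟨h0, ?_⟩⟩
          rw [h1, h0, mul_zero]
        · refine ⟨some (-(x 2) / x 0), (mem_Dfam_some D _ x).mpr ⟨?_, ?_⟩⟩
          · field_simp
          · rw [h3, h1]
            field_simp
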